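/- Additive property of accuracies: if θ₁ = h(θ₀, y₁, α₁) with y₁ ~ N(x, α₁⁻¹) and θ₂ = h(θ₁, y₂, α₂) with y₂ ~ N(x, α₂⁻¹) independent, then the marginal distribution of the posterior mean μ₂ (the first component of θ₂) is Gaussian: μ₂ ~ N( (μ₀ρ₀ + x(α₁+α₂)) / (ρ₀+α₁+α₂), (α₁+α₂)/(ρ₀+α₁+α₂)² ), i.e. the same distribution obtained from a single Bayesian update with accuracy α₁+α₂ and observation y ~ N(x, (α₁+α₂)⁻¹). -/

import Mathlib

open MeasureTheory ProbabilityTheory Real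
open scoped NNReal ENNReal

/-- The Gaussian Bayesian update function. -/
noncomputable def bayesUpdate (θ : ℝ × ℝ) (y α : ℝ) : ℝ × ℝ :=
  ((θ.1 * θ.2 + y * α) / (θ.2 + α), θ.2 + α)

private lemma key_exp {m₁ m₂ v₁ v₂ : ℝ} (h₁ : 0 < v₁) (h₂ : 0 < v₂) (z x : ℝ) :
    (-(x - m₁)^2/(2*v₁)) + (-(z - x - m₂)^2/(2*v₂))
      = (-(z - (m₁ + m₂))^2/(2*(v₁+v₂)))
        + (-(x - (m₁*v₂ + (z - m₂)*v₁)/(v₁+v₂))^2/(2*(v₁*v₂/(v₁+v₂)))) := by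
  have hs : v₁ + v₂ ≠ 0 := by positivity
  field_simp
  ring

private lemma key_const {v₁ v₂ : ℝ} (h₁ : 0 < v₁) (h₂ : 0 < v₂) :
    (√(2*π*v₁))⁻¹ * (√(2*π*v₂))⁻¹
      = (√(2*π*(v₁+v₂)))⁻¹ * (√(2*π*(v₁*v₂/(v₁+v₂))))⁻¹ := by
  have hs : (0:ℝ) < v₁ + v₂ := by positivity
  rw [← mul_inv, ← mul_inv, ← Real.sqrt_mul (by positivity), ← Real.sqrt_mul (by positivity)]
  congr 1
  field_simp

private lemma pdf_prod (m₁ m₂ : ℝ) {v₁ v₂ : ℝ≥0} (h₁ : v₁ ≠ 0) (h₂ : v₂ ≠ 0) (z x : ℝ) :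
    gaussianPDFReal m₁ v₁ x * gaussianPDFReal m₂ v₂ (z - x)
      = gaussianPDFReal (m₁ + m₂) (v₁ + v₂) z
        * gaussianPDFReal ((m₁*(v₂:ℝ) + (z - m₂)*(v₁:ℝ))/((v₁:ℝ)+(v₂:ℝ))) (v₁*v₂/(v₁+v₂)) x := by
  have hp₁ : (0:ℝ) < v₁ := by positivity
  have hp₂ : (0:ℝ) < v₂ := by positivity
  simp only [gaussianPDFReal]
  have hc : ((v₁*v₂/(v₁+v₂) : ℝ≥0) : ℝ) = (v₁:ℝ)*(v₂:ℝ)/((v₁:ℝ)+(v₂:ℝ)) := by push_cast; ring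
  rw [NNReal.coe_add, hc]
  rw [mul_mul_mul_comm, ← Real.exp_add, mul_mul_mul_comm, ← Real.exp_add,
    key_const hp₁ hp₂, key_exp hp₁ hp₂ z x]

/-- The sum of two independent Gaussian measures (as a pushforward of the product measure by
addition) is Gaussian, with means and variances adding. -/
private lemma gaussian_conv {m₁ m₂ : ℝ} {v₁ v₂ : ℝ≥0} (h₁ : v₁ ≠ 0) (h₂ : v₂ ≠ 0) :
    Measure.map (fun p : ℝ × ℝ => p.1 + p.2)
        ((gaussianReal m₁ v₁).prod (gaussianReal m₂ v₂))
      = gaussianReal (m₁ + m₂) (v₁ + v₂) := by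
  have hsum : v₁ + v₂ ≠ 0 := by simp [h₁]
  have hstar : v₁ * v₂ / (v₁ + v₂) ≠ 0 := div_ne_zero (mul_ne_zero h₁ h₂) hsum
  ext s hs
  rw [Measure.map_apply measurable_add hs, Measure.prod_apply (measurable_add hs)]
  have hinner : ∀ x : ℝ,
      (gaussianReal m₂ v₂) (Prod.mk x ⁻¹' ((fun p : ℝ × ℝ => p.1 + p.2) ⁻¹' s))
        = ∫⁻ z in s, ENNReal.ofReal (gaussianPDFReal m₂ v₂ (z - x)) := by
    intro x
    have he : (Prod.mk x ⁻¹' ((fun p : ℝ × ℝ => p.1 + p.2) ⁻¹' s))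
        = (fun y => x + y) ⁻¹' s := rfl
    rw [he, ← Measure.map_apply (measurable_const_add x) hs, gaussianReal_map_const_add,
      gaussianReal_of_var_ne_zero _ h₂, withDensity_apply _ hs]
    refine lintegral_congr fun z => ?_
    rw [gaussianPDF, gaussianPDFReal_sub z x]
  simp_rw [hinner]
  have hg : Measurable fun x : ℝ =>
      ∫⁻ z in s, ENNReal.ofReal (gaussianPDFReal m₂ v₂ (z - x)) := by
    apply Measurable.lintegral_prod_right'
      (f := fun p : ℝ × ℝ => ENNReal.ofReal (gaussianPDFReal m₂ v₂ (p.2 - p.1)))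
    exact ((measurable_gaussianPDFReal m₂ v₂).comp
      (measurable_snd.sub measurable_fst)).ennreal_ofReal
  rw [gaussianReal_of_var_ne_zero _ h₁,
    lintegral_withDensity_eq_lintegral_mul _ (measurable_gaussianPDF _ _) hg]
  have hmul : ∀ x : ℝ,
      (gaussianPDF m₁ v₁ * fun x => ∫⁻ z in s, ENNReal.ofReal (gaussianPDFReal m₂ v₂ (z - x))) x
        = ∫⁻ z in s, ENNReal.ofReal (gaussianPDFReal m₁ v₁ x * gaussianPDFReal m₂ v₂ (z - x)) := by
    intro x
    simp only [Pi.mul_apply, gaussianPDF]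
    rw [← lintegral_const_mul (f := fun z => ENNReal.ofReal (gaussianPDFReal m₂ v₂ (z - x))) _
      (by exact ((measurable_gaussianPDFReal m₂ v₂).comp (measurable_sub_const x)).ennreal_ofReal)]
    refine lintegral_congr fun z => ?_
    rw [← ENNReal.ofReal_mul (gaussianPDFReal_nonneg _ _ _)]
  simp_rw [hmul]
  rw [lintegral_lintegral_swap (by
    exact (((measurable_gaussianPDFReal m₁ v₁).comp measurable_fst).mul
      ((measurable_gaussianPDFReal m₂ v₂).comp
        (measurable_snd.sub measurable_fst))).ennreal_ofReal.aemeasurable)]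
  have hfin : ∀ z : ℝ,
      ∫⁻ x, ENNReal.ofReal (gaussianPDFReal m₁ v₁ x * gaussianPDFReal m₂ v₂ (z - x))
        = gaussianPDF (m₁ + m₂) (v₁ + v₂) z := by
    intro z
    calc ∫⁻ x, ENNReal.ofReal (gaussianPDFReal m₁ v₁ x * gaussianPDFReal m₂ v₂ (z - x))
        = ∫⁻ x, ENNReal.ofReal (gaussianPDFReal (m₁ + m₂) (v₁ + v₂) z)
            * ENNReal.ofReal (gaussianPDFReal
              ((m₁*(v₂:ℝ) + (z - m₂)*(v₁:ℝ))/((v₁:ℝ)+(v₂:ℝ))) (v₁*v₂/(v₁+v₂)) x) := by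
          refine lintegral_congr fun x => ?_
          rw [pdf_prod m₁ m₂ h₁ h₂ z x,
            ENNReal.ofReal_mul (gaussianPDFReal_nonneg _ _ _)]
      _ = gaussianPDF (m₁ + m₂) (v₁ + v₂) z := by
          rw [lintegral_const_mul _ ((measurable_gaussianPDFReal _ _).ennreal_ofReal)]
          rw [lintegral_gaussianPDFReal_eq_one _ hstar, mul_one, gaussianPDF]
  simp_rw [hfin]
  rw [gaussianReal_of_var_ne_zero _ hsum, withDensity_apply _ hs]

/-- Additive property of accuracies: after two Bayesian updates with independent
Gaussian observations `Y₁ ~ N(x, α₁⁻¹)`, `Y₂ ~ N(x, α₂⁻¹)`, the posterior mean `μ₂`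
is distributed as `N((μ₀ρ₀ + x(α₁+α₂))/(ρ₀+α₁+α₂), (α₁+α₂)/(ρ₀+α₁+α₂)²)`,
the distribution obtained from a single update with accuracy `α₁ + α₂`. -/
theorem bayes_flow_additive_accuracy
    {Ω : Type*} [MeasurableSpace Ω] (P : Measure Ω) [IsProbabilityMeasure P]
    (μ₀ ρ₀ x α₁ α₂ : ℝ) (hρ : 0 < ρ₀) (h₁ : 0 < α₁) (h₂ : 0 < α₂)
    (Y₁ Y₂ : Ω → ℝ) (hm₁ : Measurable Y₁) (hm₂ : Measurable Y₂)
    (hY₁ : P.map Y₁ = gaussianReal x (α₁⁻¹).toNNReal)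
    (hY₂ : P.map Y₂ = gaussianReal x (α₂⁻¹).toNNReal)
    (hindep : IndepFun Y₁ Y₂ P) :
    P.map (fun ω =>
        (bayesUpdate (bayesUpdate (μ₀, ρ₀) (Y₁ ω) α₁) (Y₂ ω) α₂).1) =
      gaussianReal ((μ₀ * ρ₀ + x * (α₁ + α₂)) / (ρ₀ + α₁ + α₂))
        (((α₁ + α₂) / (ρ₀ + α₁ + α₂) ^ 2)).toNNReal := by
  set s : ℝ := ρ₀ + α₁ + α₂ with hs_def
  have hs : 0 < s := by positivity
  have hρα : ρ₀ + α₁ ≠ 0 := by positivity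
  set a : ℝ := α₁ / s with ha_def
  set b : ℝ := α₂ / s with hb_def
  set c : ℝ := μ₀ * ρ₀ / s with hc_def
  have ha : a ≠ 0 := by positivity
  have hb : b ≠ 0 := by positivity
  -- rewrite the function
  have hfun : (fun ω =>
      (bayesUpdate (bayesUpdate (μ₀, ρ₀) (Y₁ ω) α₁) (Y₂ ω) α₂).1)
      = fun ω => (a * Y₁ ω + b * Y₂ ω) + c := by
    funext ω
    simp only [bayesUpdate, ha_def, hb_def, hc_def, hs_def]
    rw [div_mul_cancel₀ _ hρα]
    field_simp
    ring
  rw [hfun]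
  -- distributions of the scaled variables
  have hX₁ : P.map (fun ω => a * Y₁ ω)
      = gaussianReal (a * x) (NNReal.mk (a ^ 2) (sq_nonneg a) * (α₁⁻¹).toNNReal) := by
    rw [show (fun ω => a * Y₁ ω) = (a * ·) ∘ Y₁ from rfl,
      ← Measure.map_map (measurable_const_mul a) hm₁, hY₁, gaussianReal_map_const_mul]
  have hX₂ : P.map (fun ω => b * Y₂ ω)
      = gaussianReal (b * x) (NNReal.mk (b ^ 2) (sq_nonneg b) * (α₂⁻¹).toNNReal) := by
    rw [show (fun ω => b * Y₂ ω) = (b * ·) ∘ Y₂ from rfl,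
      ← Measure.map_map (measurable_const_mul b) hm₂, hY₂, gaussianReal_map_const_mul]
  have hv₁ : (NNReal.mk (a ^ 2) (sq_nonneg a) * (α₁⁻¹).toNNReal : ℝ≥0) ≠ 0 := by
    refine mul_ne_zero ?_ ?_
    · simp only [ne_eq, ← NNReal.coe_eq_zero]
      exact pow_ne_zero 2 ha
    · exact (Real.toNNReal_pos.mpr (by positivity)).ne'
  have hv₂ : (NNReal.mk (b ^ 2) (sq_nonneg b) * (α₂⁻¹).toNNReal : ℝ≥0) ≠ 0 := by
    refine mul_ne_zero ?_ ?_
    · simp only [ne_eq, ← NNReal.coe_eq_zero]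
      exact pow_ne_zero 2 hb
    · exact (Real.toNNReal_pos.mpr (by positivity)).ne'
  -- independence of scaled variables
  have hindep' : IndepFun (fun ω => a * Y₁ ω) (fun ω => b * Y₂ ω) P :=
    hindep.comp (measurable_const_mul a) (measurable_const_mul b)
  have hprod : P.map (fun ω => (a * Y₁ ω, b * Y₂ ω))
      = (P.map (fun ω => a * Y₁ ω)).prod (P.map (fun ω => b * Y₂ ω)) :=
    (indepFun_iff_map_prod_eq_prod_map_map (hm₁.const_mul a).aemeasurable
      (hm₂.const_mul b).aemeasurable).mp hindep'
  have hsum : P.map (fun ω => a * Y₁ ω + b * Y₂ ω)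
      = gaussianReal (a * x + b * x)
        (NNReal.mk (a ^ 2) (sq_nonneg a) * (α₁⁻¹).toNNReal + NNReal.mk (b ^ 2) (sq_nonneg b) * (α₂⁻¹).toNNReal) := by
    rw [show (fun ω => a * Y₁ ω + b * Y₂ ω)
        = (fun p : ℝ × ℝ => p.1 + p.2) ∘ (fun ω => (a * Y₁ ω, b * Y₂ ω)) from rfl,
      ← Measure.map_map measurable_add ((hm₁.const_mul a).prodMk (hm₂.const_mul b)),
      hprod, hX₁, hX₂, gaussian_conv hv₁ hv₂]
  have hfinal : P.map (fun ω => (a * Y₁ ω + b * Y₂ ω) + c)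
      = gaussianReal (a * x + b * x + c)
        (NNReal.mk (a ^ 2) (sq_nonneg a) * (α₁⁻¹).toNNReal + NNReal.mk (b ^ 2) (sq_nonneg b) * (α₂⁻¹).toNNReal) := by
    rw [show (fun ω => (a * Y₁ ω + b * Y₂ ω) + c)
        = (· + c) ∘ (fun ω => a * Y₁ ω + b * Y₂ ω) from rfl,
      ← Measure.map_map (f := fun ω => a * Y₁ ω + b * Y₂ ω) (measurable_add_const c)
        ((hm₁.const_mul a).add (hm₂.const_mul b)),
      hsum, gaussianReal_map_add_const]
  rw [hfinal]
  congr 1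
  · rw [ha_def, hb_def, hc_def]
    field_simp
    ring
  · apply NNReal.coe_injective
    push_cast
    rw [Real.coe_toNNReal _ (by positivity), Real.coe_toNNReal _ (by positivity),
      Real.coe_toNNReal _ (by positivity)]
    rw [ha_def, hb_def]
    field_simp
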